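/- For all reals t ≥ 0 and δ ≥ 0, the standard Gaussian tail satisfies Q(t)^{δ²}/(√(2π)·(δ·t + λ0)) ≤ Q(δ·t) ≤ (√(2π)·(t + λ0))^{δ²} · Q(t)^{δ²}. -/

import Mathlib

open MeasureTheory ProbabilityTheory Real

/-- Standard Gaussian upper tail probability. -/
noncomputable def Q (t : ℝ) : ℝ := ((gaussianReal 0 1) (Set.Ioi t)).toReal

noncomputable def lam0 : ℝ := Real.sqrt (2 / Real.pi)

section Aux
open Set Filter

/-- The standard Gaussian pdf. -/
noncomputable def phiG (x : ℝ) : ℝ := (Real.sqrt (2 * Real.pi))⁻¹ * Real.exp (-x ^ 2 / 2)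

lemma sqrt2pi_pos : 0 < Real.sqrt (2 * Real.pi) := Real.sqrt_pos.mpr (by positivity)

lemma one_le_sqrt2pi : 1 ≤ Real.sqrt (2 * Real.pi) := by
  rw [show (1:ℝ) = Real.sqrt 1 by simp]
  exact Real.sqrt_le_sqrt (by nlinarith [Real.pi_gt_three])

lemma lam0_pos : 0 < lam0 := Real.sqrt_pos.mpr (by positivity)

lemma sqrt2pi_mul_lam0 : Real.sqrt (2 * Real.pi) * lam0 = 2 := by
  rw [lam0, ← Real.sqrt_mul (by positivity)]
  rw [show 2 * Real.pi * (2 / Real.pi) = 4 by field_simp; ring]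
  rw [show (4:ℝ) = 2 ^ 2 by norm_num, Real.sqrt_sq (by norm_num)]

lemma phiG_nonneg (x : ℝ) : 0 ≤ phiG x := by
  unfold phiG; positivity

lemma continuous_phiG : Continuous phiG := by
  unfold phiG
  fun_prop

lemma phiG_eq_pdf : gaussianPDFReal 0 1 = phiG := by
  ext x
  simp [gaussianPDFReal, phiG]

lemma integrable_phiG : Integrable phiG := by
  rw [← phiG_eq_pdf]; exact integrable_gaussianPDFReal 0 1

lemma Q_eq (t : ℝ) : Q t = ∫ x in Set.Ioi t, phiG x := by
  rw [Q, gaussianReal_apply_eq_integral 0 one_ne_zero, ENNReal.toReal_ofReal, phiG_eq_pdf]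
  rw [phiG_eq_pdf]
  exact setIntegral_nonneg measurableSet_Ioi fun x _ => phiG_nonneg x

lemma Q_nonneg (t : ℝ) : 0 ≤ Q t := ENNReal.toReal_nonneg

lemma Q_split {a b : ℝ} (h : a ≤ b) : Q a = (∫ x in Set.Ioc a b, phiG x) + Q b := by
  rw [Q_eq, Q_eq, ← Set.Ioc_union_Ioi_eq_Ioi h,
    setIntegral_union (Set.Ioc_disjoint_Ioi le_rfl) measurableSet_Ioi
      integrable_phiG.integrableOn integrable_phiG.integrableOn]

lemma Q_eq_sub (a b : ℝ) : Q b = Q a - ∫ x in a..b, phiG x := by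
  rcases le_total a b with h | h
  · rw [intervalIntegral.integral_of_le h, Q_split h]; ring
  · rw [intervalIntegral.integral_of_ge h, Q_split h]; ring

lemma Q_hasDerivAt (s : ℝ) : HasDerivAt Q (-phiG s) s := by
  have h : ∀ t, Q t = Q 0 - ∫ x in (0:ℝ)..t, phiG x := fun t => Q_eq_sub 0 t
  have hd : HasDerivAt (fun t => Q 0 - ∫ x in (0:ℝ)..t, phiG x) (-phiG s) s := by
    exact (intervalIntegral.integral_hasDerivAt_right
      integrable_phiG.intervalIntegrable
      continuous_phiG.stronglyMeasurable.stronglyMeasurableAtFilter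
      continuous_phiG.continuousAt).const_sub (Q 0)
  exact (funext h : Q = _) ▸ hd

lemma continuous_Q : Continuous Q :=
  continuous_iff_continuousAt.mpr fun s => (Q_hasDerivAt s).continuousAt

lemma Q_antitone : Antitone Q := by
  intro a b h
  have := Q_split h
  have h0 : 0 ≤ ∫ x in Set.Ioc a b, phiG x :=
    setIntegral_nonneg measurableSet_Ioc fun x _ => phiG_nonneg x
  linarith

lemma Q_zero : Q 0 = 1 / 2 := by
  rw [Q_eq]
  have h1 : ∀ x : ℝ, phiG x = (Real.sqrt (2 * Real.pi))⁻¹ * Real.exp (-2⁻¹ * x ^ 2) := by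
    intro x; rw [phiG]; congr 1; congr 1; ring
  simp_rw [h1]
  rw [integral_const_mul, integral_gaussian_Ioi]
  rw [show Real.pi / 2⁻¹ = 2 * Real.pi by ring]
  field_simp

lemma integral_exp_neg_mul_Ioi {s : ℝ} (hs : 0 < s) :
    ∫ x in Set.Ioi s, Real.exp (-(s * x)) = Real.exp (-s ^ 2) / s := by
  have := integral_Ioi_of_hasDerivAt_of_tendsto
    (f := fun x => -Real.exp (-(s * x)) / s) (f' := fun x => Real.exp (-(s * x))) (a := s) (m := 0)
    ?_ ?_ ?_ ?_
  · rw [this]; rw [show s * s = s ^ 2 by ring]; field_simp; ring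
  · exact ((Real.continuous_exp.comp ((continuous_const.mul continuous_id).neg)).neg.div_const s).continuousWithinAt
  · intro x _
    have h1 : HasDerivAt (fun x : ℝ => -(s * x)) (-s) x := by
      refine (((hasDerivAt_id x).const_mul s).neg).congr_deriv ?_
      simp
    have h2 := (h1.exp.neg.div_const s)
    refine h2.congr_deriv ?_
    field_simp
  · have : ∀ x, Real.exp (-(s * x)) = Real.exp (-(s * x)) := fun _ => rfl
    exact (exp_neg_integrableOn_Ioi s hs).congr_fun (fun x _ => by simp only [neg_mul]) measurableSet_Ioi
  · have h : Tendsto (fun x : ℝ => s * x) atTop atTop :=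
      Tendsto.const_mul_atTop hs tendsto_id
    have := (Real.tendsto_exp_neg_atTop_nhds_zero.comp h).neg.div_const s
    simpa using this

lemma Q_le_phiG_div {s : ℝ} (hs : 0 < s) : Q s ≤ phiG s / s := by
  rw [Q_eq]
  have hmono : (∫ x in Set.Ioi s, phiG x) ≤
      ∫ x in Set.Ioi s, (Real.sqrt (2 * Real.pi))⁻¹ * Real.exp (s ^ 2 / 2) * Real.exp (-(s * x)) := by
    apply setIntegral_mono_on integrable_phiG.integrableOn _ measurableSet_Ioi
    · intro x hx
      rw [phiG, mul_assoc, ← Real.exp_add]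
      apply mul_le_mul_of_nonneg_left _ (by positivity)
      apply Real.exp_le_exp.mpr
      nlinarith [sq_nonneg (x - s)]
    · apply Integrable.const_mul
      exact (exp_neg_integrableOn_Ioi s hs).congr_fun (fun x _ => by simp only [neg_mul]) measurableSet_Ioi
  rw [integral_const_mul, integral_exp_neg_mul_Ioi hs] at hmono
  refine hmono.trans_eq ?_
  have h3 : Real.exp (s ^ 2 / 2) * Real.exp (-s ^ 2) = Real.exp (-s ^ 2 / 2) := by
    rw [← Real.exp_add]; ring_nf
  rw [show (Real.sqrt (2 * Real.pi))⁻¹ * Real.exp (s ^ 2 / 2) * (Real.exp (-s ^ 2) / s)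
      = (Real.sqrt (2 * Real.pi))⁻¹ * (Real.exp (s ^ 2 / 2) * Real.exp (-s ^ 2)) / s from by
        ring, h3, phiG]

lemma Q_le_exp {s : ℝ} (hs : 0 ≤ s) : Q s ≤ Real.exp (-s ^ 2 / 2) := by
  rcases le_or_gt s 1 with h1 | h1
  · have hQ : Q s ≤ 1 / 2 := by
      have := Q_antitone hs
      rw [Q_zero] at this; exact this
    refine hQ.trans ?_
    have : Real.exp (-Real.log 2) ≤ Real.exp (-s ^ 2 / 2) := by
      apply Real.exp_le_exp.mpr
      nlinarith [Real.log_two_gt_d9]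
    rw [Real.exp_neg, Real.exp_log two_pos] at this
    linarith
  · refine (Q_le_phiG_div (by linarith)).trans ?_
    rw [phiG]
    rw [div_le_iff₀ (by linarith)]
    have h2 : (Real.sqrt (2 * Real.pi))⁻¹ ≤ 1 := by
      rw [inv_le_one_iff₀]; right; exact one_le_sqrt2pi
    nlinarith [Real.exp_pos (-s ^ 2 / 2)]

lemma tendsto_Q_atTop : Tendsto Q atTop (nhds 0) := by
  have hexp : Tendsto (fun s : ℝ => Real.exp (-s ^ 2 / 2)) atTop (nhds 0) := by
    have h1 : Tendsto (fun s : ℝ => s ^ 2 / 2) atTop atTop :=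
      (tendsto_pow_atTop two_ne_zero).atTop_div_const two_pos
    have := Real.tendsto_exp_neg_atTop_nhds_zero.comp h1
    refine this.congr fun s => ?_
    simp [Function.comp, neg_div]
  apply squeeze_zero' (Eventually.of_forall fun s => Q_nonneg s)
    (eventually_atTop.mpr ⟨0, fun s hs => Q_le_exp hs⟩) hexp

/-- The auxiliary function whose nonnegativity is the Gaussian tail lower bound. -/
noncomputable def gG (s : ℝ) : ℝ :=
  Real.sqrt (2 * Real.pi) * (s + lam0) * Q s - Real.exp (-s ^ 2 / 2)

/-- Derivative of `gG`. -/
noncomputable def uG (s : ℝ) : ℝ :=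
  Real.sqrt (2 * Real.pi) * Q s - lam0 * Real.exp (-s ^ 2 / 2)

lemma hasDerivAt_expsq (x : ℝ) :
    HasDerivAt (fun x : ℝ => Real.exp (-x ^ 2 / 2)) (-x * Real.exp (-x ^ 2 / 2)) x := by
  have h1 : HasDerivAt (fun x : ℝ => -x ^ 2 / 2) (-x) x := by
    have := ((hasDerivAt_pow 2 x).neg.div_const 2)
    refine this.congr_deriv ?_
    simp; ring
  simpa [mul_comm] using h1.exp

lemma sqrt2pi_phiG (x : ℝ) : Real.sqrt (2 * Real.pi) * phiG x = Real.exp (-x ^ 2 / 2) := by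
  rw [phiG, ← mul_assoc, mul_inv_cancel₀ (ne_of_gt sqrt2pi_pos), one_mul]

lemma hasDerivAt_gG (s : ℝ) : HasDerivAt gG (uG s) s := by
  have h1 : HasDerivAt (fun s => Real.sqrt (2 * Real.pi) * (s + lam0) * Q s)
      (Real.sqrt (2 * Real.pi) * Q s + Real.sqrt (2 * Real.pi) * (s + lam0) * (-phiG s)) s := by
    have ha : HasDerivAt (fun s : ℝ => Real.sqrt (2 * Real.pi) * (s + lam0))
        (Real.sqrt (2 * Real.pi)) s := by
      simpa using ((hasDerivAt_id s).add_const lam0).const_mul (Real.sqrt (2 * Real.pi))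
    exact ha.mul (Q_hasDerivAt s)
  have h2 := h1.sub (hasDerivAt_expsq s)
  refine h2.congr_deriv (Eq.symm ?_)
  rw [uG]
  linear_combination (s + lam0) * sqrt2pi_phiG s

lemma hasDerivAt_uG (s : ℝ) :
    HasDerivAt uG (Real.exp (-s ^ 2 / 2) * (lam0 * s - 1)) s := by
  have h1 := ((Q_hasDerivAt s).const_mul (Real.sqrt (2 * Real.pi))).sub
    ((hasDerivAt_expsq s).const_mul lam0)
  refine h1.congr_deriv (Eq.symm ?_)
  linear_combination sqrt2pi_phiG s

lemma tendsto_uG_atTop : Tendsto uG atTop (nhds 0) := by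
  have hexp : Tendsto (fun s : ℝ => Real.exp (-s ^ 2 / 2)) atTop (nhds 0) := by
    have h1 : Tendsto (fun s : ℝ => s ^ 2 / 2) atTop atTop :=
      (tendsto_pow_atTop two_ne_zero).atTop_div_const two_pos
    exact (Real.tendsto_exp_neg_atTop_nhds_zero.comp h1).congr fun s => by
      simp [Function.comp, neg_div]
  have := (tendsto_Q_atTop.const_mul (Real.sqrt (2 * Real.pi))).sub (hexp.const_mul lam0)
  simp only [mul_zero, sub_zero] at this; exact this

lemma tendsto_gG_atTop : Tendsto gG atTop (nhds 0) := by
  have hexp : Tendsto (fun s : ℝ => Real.exp (-s ^ 2 / 2)) atTop (nhds 0) := by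
    have h1 : Tendsto (fun s : ℝ => s ^ 2 / 2) atTop atTop :=
      (tendsto_pow_atTop two_ne_zero).atTop_div_const two_pos
    exact (Real.tendsto_exp_neg_atTop_nhds_zero.comp h1).congr fun s => by
      simp [Function.comp, neg_div]
  have hmain : Tendsto (fun s => Real.sqrt (2 * Real.pi) * (s + lam0) * Q s) atTop (nhds 0) := by
    have hub : Tendsto (fun s : ℝ =>
        Real.sqrt (2 * Real.pi) * (1 + lam0) * phiG s) atTop (nhds 0) := by
      have hphi : Tendsto phiG atTop (nhds 0) := by
        have := hexp.const_mul (Real.sqrt (2 * Real.pi))⁻¹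
        simp only [mul_zero] at this; exact this
      simpa only [mul_zero] using hphi.const_mul (Real.sqrt (2 * Real.pi) * (1 + lam0))
    apply squeeze_zero' (eventually_atTop.mpr ⟨0, fun s hs => by
      have := Q_nonneg s
      have h0 : (0:ℝ) ≤ s + lam0 := by linarith [lam0_pos]
      positivity⟩)
      (eventually_atTop.mpr ⟨1, fun s hs => ?_⟩) hub
    have hq : s * Q s ≤ phiG s := by
      have := Q_le_phiG_div (show (0:ℝ) < s by linarith)
      rw [le_div_iff₀ (by linarith)] at this
      linarith [this]
    have hQ0 := Q_nonneg s
    have hp0 := phiG_nonneg s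
    have hl0 := lam0_pos.le
    have hsq : Q s ≤ phiG s := by nlinarith
    have : (s + lam0) * Q s ≤ (1 + lam0) * phiG s := by nlinarith
    rw [mul_assoc, mul_assoc]
    exact mul_le_mul_of_nonneg_left this sqrt2pi_pos.le
  have := hmain.sub hexp
  simp only [sub_zero] at this; exact this

lemma gG_zero : gG 0 = 0 := by
  rw [gG, Q_zero]
  have he : Real.exp (-(0:ℝ) ^ 2 / 2) = 1 := by norm_num
  rw [he]
  linear_combination sqrt2pi_mul_lam0 / 2

lemma uG_monotoneOn : MonotoneOn uG (Set.Ici (1 / lam0)) := by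
  apply monotoneOn_of_deriv_nonneg (convex_Ici _)
  · exact fun x _ => ((hasDerivAt_uG x).continuousAt).continuousWithinAt
  · exact fun x _ => ((hasDerivAt_uG x).differentiableAt).differentiableWithinAt
  · intro x hx
    rw [interior_Ici] at hx
    rw [(hasDerivAt_uG x).deriv]
    have h1 : 1 / lam0 < x := hx
    have h2 : 1 < lam0 * x := by
      rw [div_lt_iff₀ lam0_pos] at h1
      linarith
    have := Real.exp_pos (-x ^ 2 / 2)
    nlinarith

lemma uG_antitoneOn : AntitoneOn uG (Set.Icc 0 (1 / lam0)) := by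
  apply antitoneOn_of_deriv_nonpos (convex_Icc _ _)
  · exact fun x _ => ((hasDerivAt_uG x).continuousAt).continuousWithinAt
  · exact fun x _ => ((hasDerivAt_uG x).differentiableAt).differentiableWithinAt
  · intro x hx
    rw [interior_Icc] at hx
    rw [(hasDerivAt_uG x).deriv]
    have h1 : x < 1 / lam0 := hx.2
    have h2 : lam0 * x < 1 := by
      rw [lt_div_iff₀ lam0_pos] at h1
      linarith
    have := Real.exp_pos (-x ^ 2 / 2)
    nlinarith

lemma uG_nonpos {s : ℝ} (hs : 1 / lam0 ≤ s) : uG s ≤ 0 := by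
  apply ge_of_tendsto tendsto_uG_atTop
  filter_upwards [eventually_ge_atTop s] with x hx
  exact uG_monotoneOn hs (le_trans hs hx) hx

lemma gG_antitoneOn : AntitoneOn gG (Set.Ici (1 / lam0)) := by
  apply antitoneOn_of_deriv_nonpos (convex_Ici _)
  · exact fun x _ => ((hasDerivAt_gG x).continuousAt).continuousWithinAt
  · exact fun x _ => ((hasDerivAt_gG x).differentiableAt).differentiableWithinAt
  · intro x hx
    rw [interior_Ici] at hx
    rw [(hasDerivAt_gG x).deriv]
    exact uG_nonpos (le_of_lt hx)

lemma gG_nonneg_of_ge {s : ℝ} (hs : 1 / lam0 ≤ s) : 0 ≤ gG s := by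
  apply le_of_tendsto tendsto_gG_atTop
  filter_upwards [eventually_ge_atTop s] with x hx
  exact gG_antitoneOn hs (le_trans hs hx) hx

lemma gG_nonneg {s : ℝ} (hs : 0 ≤ s) : 0 ≤ gG s := by
  rcases le_or_gt (1 / lam0) s with h | h
  · exact gG_nonneg_of_ge h
  · -- s ∈ [0, 1/lam0)
    have hc : (0:ℝ) ≤ 1 / lam0 := div_nonneg zero_le_one lam0_pos.le
    rcases le_or_gt 0 (uG s) with hu | hu
    · -- uG ≥ 0 on [0, s], so gG monotone on [0, s]
      have hmono : MonotoneOn gG (Set.Icc 0 s) := by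
        apply monotoneOn_of_deriv_nonneg (convex_Icc _ _)
        · exact fun x _ => ((hasDerivAt_gG x).continuousAt).continuousWithinAt
        · exact fun x _ => ((hasDerivAt_gG x).differentiableAt).differentiableWithinAt
        · intro x hx
          rw [interior_Icc] at hx
          rw [(hasDerivAt_gG x).deriv]
          have := uG_antitoneOn (Set.mem_Icc.mpr ⟨hx.1.le, le_of_lt (lt_trans hx.2 h)⟩)
            (Set.mem_Icc.mpr ⟨hs, h.le⟩) hx.2.le
          linarith
      have := hmono (Set.mem_Icc.mpr ⟨le_refl 0, hs⟩) (Set.mem_Icc.mpr ⟨hs, le_refl s⟩) hs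
      rw [gG_zero] at this
      exact this
    · -- uG < 0 on [s, 1/lam0], so gG antitone on [s, 1/lam0]
      have hanti : AntitoneOn gG (Set.Icc s (1 / lam0)) := by
        apply antitoneOn_of_deriv_nonpos (convex_Icc _ _)
        · exact fun x _ => ((hasDerivAt_gG x).continuousAt).continuousWithinAt
        · exact fun x _ => ((hasDerivAt_gG x).differentiableAt).differentiableWithinAt
        · intro x hx
          rw [interior_Icc] at hx
          rw [(hasDerivAt_gG x).deriv]
          have := uG_antitoneOn (Set.mem_Icc.mpr ⟨hs, h.le⟩)
            (Set.mem_Icc.mpr ⟨le_trans hs hx.1.le, hx.2.le⟩) hx.1.le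
          linarith
      have := hanti (Set.mem_Icc.mpr ⟨le_refl s, h.le⟩)
        (Set.mem_Icc.mpr ⟨h.le, le_refl _⟩) h.le
      exact le_trans (gG_nonneg_of_ge (le_refl _)) this

lemma exp_le_tail {s : ℝ} (hs : 0 ≤ s) :
    Real.exp (-s ^ 2 / 2) ≤ Real.sqrt (2 * Real.pi) * (s + lam0) * Q s := by
  have := gG_nonneg hs
  rw [gG] at this
  linarith

end Aux

theorem Q_scaled_tail_bounds (t δ : ℝ) (ht : 0 ≤ t) (hδ : 0 ≤ δ) :
    Q t ^ (δ ^ 2) / (Real.sqrt (2 * Real.pi) * (δ * t + lam0)) ≤ Q (δ * t) ∧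
    Q (δ * t) ≤ (Real.sqrt (2 * Real.pi) * (t + lam0)) ^ (δ ^ 2) * Q t ^ (δ ^ 2) := by
  have hd2 : (0:ℝ) ≤ δ ^ 2 := sq_nonneg δ
  have hdt : 0 ≤ δ * t := mul_nonneg hδ ht
  have hexp_eq : (Real.exp (-t ^ 2 / 2)) ^ (δ ^ 2) = Real.exp (-(δ * t) ^ 2 / 2) := by
    rw [← Real.exp_mul]
    congr 1
    ring
  constructor
  · have hA : Q t ^ (δ ^ 2) ≤ (Real.exp (-t ^ 2 / 2)) ^ (δ ^ 2) :=
      Real.rpow_le_rpow (Q_nonneg t) (Q_le_exp ht) hd2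
    rw [hexp_eq] at hA
    have hB := exp_le_tail hdt
    have hpos : 0 < Real.sqrt (2 * Real.pi) * (δ * t + lam0) :=
      mul_pos sqrt2pi_pos (by linarith [lam0_pos])
    rw [div_le_iff₀ hpos]
    calc Q t ^ (δ ^ 2) ≤ Real.sqrt (2 * Real.pi) * (δ * t + lam0) * Q (δ * t) :=
          le_trans hA hB
      _ = Q (δ * t) * (Real.sqrt (2 * Real.pi) * (δ * t + lam0)) := by ring
  · have hA : Q (δ * t) ≤ Real.exp (-(δ * t) ^ 2 / 2) := Q_le_exp hdt
    have hB : Real.exp (-t ^ 2 / 2) ≤ Real.sqrt (2 * Real.pi) * (t + lam0) * Q t :=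
      exp_le_tail ht
    have hC : (Real.exp (-t ^ 2 / 2)) ^ (δ ^ 2) ≤
        (Real.sqrt (2 * Real.pi) * (t + lam0) * Q t) ^ (δ ^ 2) :=
      Real.rpow_le_rpow (Real.exp_nonneg _) hB hd2
    rw [hexp_eq] at hC
    have hmul : (Real.sqrt (2 * Real.pi) * (t + lam0) * Q t) ^ (δ ^ 2) =
        (Real.sqrt (2 * Real.pi) * (t + lam0)) ^ (δ ^ 2) * Q t ^ (δ ^ 2) :=
      Real.mul_rpow (mul_nonneg sqrt2pi_pos.le (by linarith [lam0_pos])) (Q_nonneg t)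
    rw [hmul] at hC
    exact le_trans hA hC
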